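/- arXiv:2406.14438 — 6 statements merged into one kernel-verified Lean document; each statement's English description precedes it below -/
import Mathlib

section
/- Let ℓ be a prime number, let V be a finite-dimensional ℚ_ℓ-vector space, and let F : V → V be a linear endomorphism. Then (V, F) is 1-semi-simple if and only if the following lifting property holds: for every finite-dimensional ℚ_ℓ-vector space W equipped with a linear endomorphism G : W → W, every linear map φ : V → W satisfying φ ∘ F = G ∘ φ, and every ω ∈ W with G(ω) = ω that lies in the image of φ, there exists v ∈ V with F(v) = v and φ(v) = ω. -/
universe u v

/-- The natural map `V^F → V_F` from the invariants `ker(id − F)` to the coinvariants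
`V ⧸ im(id − F)`, given by composing the inclusion with the quotient projection. -/
noncomputable def invariantsToCoinvariants {R : Type*} [CommRing R] {V : Type*}
    [AddCommGroup V] [Module R V] (F : V →ₗ[R] V) :
    LinearMap.ker (LinearMap.id - F) →ₗ[R] V ⧸ LinearMap.range (LinearMap.id - F) :=
  (LinearMap.range (LinearMap.id - F)).mkQ ∘ₗ (LinearMap.ker (LinearMap.id - F)).subtype

/-- `(V, F)` is 1-semi-simple (the natural map `ker(id − F) → V ⧸ im(id − F)`
is an isomorphism) iff for every finite-dimensional `ℚ_[ℓ]`-vector space `W` with an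
endomorphism `G`, every equivariant linear map `φ : V → W`, and every `G`-fixed vector `ω`
in the image of `φ`, there is an `F`-fixed `v ∈ V` with `φ v = ω`. -/
theorem oneSemisimple_iff_lifting_property
    (ℓ : ℕ) [Fact ℓ.Prime] (V : Type u) [AddCommGroup V] [Module ℚ_[ℓ] V]
    [FiniteDimensional ℚ_[ℓ] V] (F : V →ₗ[ℚ_[ℓ]] V) :
    Function.Bijective (invariantsToCoinvariants F) ↔
      ∀ (W : Type v) (_ : AddCommGroup W) (_ : Module ℚ_[ℓ] W)
        (_ : FiniteDimensional ℚ_[ℓ] W) (G : W →ₗ[ℚ_[ℓ]] W) (φ : V →ₗ[ℚ_[ℓ]] W),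
        φ ∘ₗ F = G ∘ₗ φ →
          ∀ ω : W, G ω = ω → (∃ v : V, φ v = ω) → ∃ v : V, F v = v ∧ φ v = ω := by
  classical
  set T : Module.End ℚ_[ℓ] V := LinearMap.id - F with hT
  constructor
  · -- forward direction
    rintro ⟨hinj, hsurj⟩ W _ _ _ G φ hcomm ω hω ⟨u, hu⟩
    set S : Module.End ℚ_[ℓ] W := LinearMap.id - G with hS
    have hφF : ∀ v : V, φ (F v) = G (φ v) := fun v => congrFun (congrArg (↑·) hcomm) v
    have hφT : ∀ v : V, φ (T v) = S (φ v) := by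
      intro v
      simp [hT, hS, LinearMap.sub_apply, hφF v]
    have hφTn : ∀ (N : ℕ) (v : V), φ ((T ^ N) v) = (S ^ N) (φ v) := by
      intro N
      induction N with
      | zero => intro v; simp
      | succ N ih =>
        intro v
        rw [pow_succ, pow_succ]
        simp only [Module.End.mul_apply]
        rw [ih (T v), hφT v]
    -- decompose u = k + m with k ∈ ker T, m ∈ range T
    obtain ⟨⟨k, hk⟩, hkq⟩ := hsurj ((LinearMap.range T).mkQ u)
    have hkq' : (LinearMap.range T).mkQ k = (LinearMap.range T).mkQ u := hkq
    have hm : u - k ∈ LinearMap.range T := by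
      have h0 : (LinearMap.range T).mkQ (u - k) = 0 := by
        rw [map_sub, hkq', sub_self]
      rwa [Submodule.mkQ_apply, Submodule.Quotient.mk_eq_zero] at h0
    -- F fixes k
    have hFk : F k = k := by
      have : T k = 0 := hk
      have := sub_eq_zero.mp (by simpa [hT, LinearMap.sub_apply] using this)
      exact this.symm
    -- T restricted to its range is injective, hence surjective
    have hrange_mem : ∀ x ∈ LinearMap.range T, T x ∈ LinearMap.range T :=
      fun x _ => ⟨x, rfl⟩
    set T' : LinearMap.range T →ₗ[ℚ_[ℓ]] LinearMap.range T := T.restrict hrange_mem with hT'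
    have hT'inj : Function.Injective T' := by
      rw [← LinearMap.ker_eq_bot]
      rw [LinearMap.ker_eq_bot']
      rintro ⟨x, hx⟩ hx0
      have hxker : x ∈ LinearMap.ker T := by
        have : T x = 0 := congrArg Subtype.val hx0
        exact this
      have : invariantsToCoinvariants F ⟨x, hxker⟩ = invariantsToCoinvariants F 0 := by
        simp only [map_zero]
        show (LinearMap.range T).mkQ x = 0
        simpa [Submodule.Quotient.mk_eq_zero] using hx
      have := hinj this
      ext
      simpa using congrArg Subtype.val this
    have hT'surj : Function.Surjective T' :=
      (LinearMap.injective_iff_surjective).mp hT'inj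
    -- every element of range T is in range of T^N for all N
    have hiter : ∀ N : ℕ, ∃ x : V, (T ^ N) x = u - k := by
      intro N
      suffices h : ∀ N : ℕ, ∃ x : LinearMap.range T, (T ^ N) (x : V) = u - k by
        obtain ⟨x, hx⟩ := h N; exact ⟨x, hx⟩
      intro N
      induction N with
      | zero => exact ⟨⟨u - k, hm⟩, by simp⟩
      | succ N ih =>
        obtain ⟨x, hx⟩ := ih
        obtain ⟨y, hy⟩ := hT'surj x
        refine ⟨y, ?_⟩
        have hy' : T (y : V) = (x : V) := congrArg Subtype.val hy
        rw [pow_succ]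
        simpa [Module.End.mul_apply, hy'] using hx
    -- the element z := φ (u - k) is S-fixed and in range of S^n for all n
    set z : W := φ (u - k) with hz
    have hGφk : G (φ k) = φ k := by rw [← hφF, hFk]
    have hzfix : S z = 0 := by
      have : φ (u - k) = ω - φ k := by rw [map_sub, hu]
      rw [hz, this]
      simp [hS, LinearMap.sub_apply, map_sub, hω, hGφk]
    set n : ℕ := Module.finrank ℚ_[ℓ] W with hn
    obtain ⟨x, hx⟩ := hiter n
    have hzx : (S ^ n) (φ x) = z := by rw [← hφTn, hx]
    have hxker : φ x ∈ LinearMap.ker (S ^ (n + 1)) := by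
      show (S ^ (n + 1)) (φ x) = 0
      rw [pow_succ', Module.End.mul_apply, hzx, hzfix]
    have hxker' : φ x ∈ LinearMap.ker (S ^ n) := by
      rwa [Module.End.ker_pow_eq_ker_pow_finrank_of_le (by omega)] at hxker
    have hz0 : z = 0 := by rw [← hzx]; exact hxker'
    refine ⟨k, hFk, ?_⟩
    have hsub : φ u - φ k = 0 := by rw [← map_sub]; exact hz0
    rw [← hu]
    exact (sub_eq_zero.mp hsub).symm
  · -- converse direction
    intro h
    set R := LinearMap.range T with hR
    -- surjectivity via the lifting property applied to the quotient
    set m : ℕ := Module.finrank ℚ_[ℓ] (V ⧸ R) with hm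
    let e : (V ⧸ R) ≃ₗ[ℚ_[ℓ]] (Fin m → ℚ_[ℓ]) := Module.finBasis ℚ_[ℓ] (V ⧸ R) |>.equivFun
    let eW : (V ⧸ R) ≃ₗ[ℚ_[ℓ]] ULift.{v} (Fin m → ℚ_[ℓ]) :=
      e.trans ULift.moduleEquiv.symm
    let φ : V →ₗ[ℚ_[ℓ]] ULift.{v} (Fin m → ℚ_[ℓ]) := eW.toLinearMap ∘ₗ R.mkQ
    have hcomm : φ ∘ₗ F = LinearMap.id ∘ₗ φ := by
      apply LinearMap.ext
      intro v
      show eW (R.mkQ (F v)) = eW (R.mkQ v)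
      congr 1
      rw [Submodule.mkQ_apply, Submodule.mkQ_apply, Submodule.Quotient.eq]
      have hv : v - F v ∈ R := ⟨v, rfl⟩
      simpa [neg_sub] using neg_mem hv
    have hsurj : Function.Surjective (invariantsToCoinvariants F) := by
      intro q
      obtain ⟨u, hu⟩ := R.mkQ_surjective q
      obtain ⟨v, hFv, hφv⟩ := h (ULift.{v} (Fin m → ℚ_[ℓ])) inferInstance inferInstance
        (Module.Finite.equiv eW) LinearMap.id φ hcomm
        (φ u) rfl ⟨u, rfl⟩
      have hvq : R.mkQ v = R.mkQ u := eW.injective hφv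
      have hvker : v ∈ LinearMap.ker T := by
        show T v = 0
        simp [hT, LinearMap.sub_apply, hFv]
      exact ⟨⟨v, hvker⟩, by simpa [invariantsToCoinvariants] using hvq.trans hu⟩
    have hdim : Module.finrank ℚ_[ℓ] (LinearMap.ker T) = Module.finrank ℚ_[ℓ] (V ⧸ R) := by
      have h1 := LinearMap.finrank_range_add_finrank_ker T
      rw [← hR] at h1
      have h2 := Submodule.finrank_quotient_add_finrank R
      omega
    exact ⟨(LinearMap.injective_iff_surjective_of_finrank_eq_finrank hdim).mpr hsurj, hsurj⟩
end

section
/- Let ℓ be a prime number, let V be a finite-dimensional ℚ_ℓ-vector space, and let F : V → V be a linear endomorphism such that (V, F) is 1-semi-simple. Let W ⊆ V be a linear subspace with F(W) ⊆ W, and let F̄ : V/W → V/W denote the endomorphism induced by F on the quotient. Then (V/W, F̄) is 1-semi-simple, i.e. the natural map ker(id − F̄) → (V/W)/im(id − F̄) is an isomorphism. -/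
/-- If the invariants-to-coinvariants map of an endomorphism of a finite-dimensional
vector space is surjective, it is bijective, since `ker(id − f)` and `V ⧸ im(id − f)`
have the same (finite) dimension by rank-nullity. -/
lemma aux_bij {K V : Type*} [Field K] [AddCommGroup V] [Module K V] [FiniteDimensional K V]
    (f : V →ₗ[K] V) (h : Function.Surjective (invariantsToCoinvariants f)) :
    Function.Bijective (invariantsToCoinvariants f) := by
  have hdim : Module.finrank K (LinearMap.ker (LinearMap.id - f)) =
      Module.finrank K (V ⧸ LinearMap.range (LinearMap.id - f)) := by
    have h1 := Submodule.finrank_quotient_add_finrank (LinearMap.range (LinearMap.id - f))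
    have h2 := LinearMap.finrank_range_add_finrank_ker (LinearMap.id - f)
    omega
  exact ⟨(LinearMap.injective_iff_surjective_of_finrank_eq_finrank hdim).mpr h, h⟩

/-- If `(V, F)` is 1-semi-simple and `W ⊆ V` is an `F`-invariant subspace,
then the endomorphism `F̄` induced by `F` on the quotient `V ⧸ W` is 1-semi-simple. -/
theorem oneSemisimple_quotient
    (ℓ : ℕ) [Fact ℓ.Prime] (V : Type*) [AddCommGroup V] [Module ℚ_[ℓ] V]
    [FiniteDimensional ℚ_[ℓ] V] (F : V →ₗ[ℚ_[ℓ]] V)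
    (hF : Function.Bijective (invariantsToCoinvariants F))
    (W : Submodule ℚ_[ℓ] V) (hW : W ≤ W.comap F) :
    Function.Bijective (invariantsToCoinvariants (W.mapQ W F hW)) := by
  set Fb := W.mapQ W F hW with hFb
  set G := LinearMap.id - F with hG
  set Gb := LinearMap.id - Fb with hGb
  have key : ∀ u : V, Gb (W.mkQ u) = W.mkQ (G u) := by
    intro u
    simp [hGb, hG, hFb, LinearMap.sub_apply, Submodule.mapQ_apply, map_sub]
  apply aux_bij
  intro y
  obtain ⟨y', rfl⟩ := Submodule.mkQ_surjective _ y
  obtain ⟨x, rfl⟩ := Submodule.mkQ_surjective _ y'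
  obtain ⟨⟨k, hk⟩, hkx⟩ := hF.2 ((LinearMap.range G).mkQ x)
  -- `x - k ∈ range G`
  have hxk : x - k ∈ LinearMap.range G := by
    have : (LinearMap.range G).mkQ k = (LinearMap.range G).mkQ x := hkx
    rw [Submodule.mkQ_apply, Submodule.mkQ_apply, Submodule.Quotient.eq] at this
    have h2 := neg_mem this
    rwa [neg_sub] at h2
  obtain ⟨u, hu⟩ := hxk
  refine ⟨⟨W.mkQ k, ?_⟩, ?_⟩
  · have : G k = 0 := hk
    simp only [LinearMap.mem_ker]
    rw [key, this, map_zero]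
  · show Submodule.Quotient.mk (W.mkQ k) = Submodule.Quotient.mk (W.mkQ x)
    rw [Submodule.Quotient.eq]
    refine ⟨W.mkQ (-u), ?_⟩
    rw [key, map_neg, hu]
    simp [map_sub]
end

section
/- Let ℓ be a prime number. Let W, V, Q be finite-dimensional ℚ_ℓ-vector spaces equipped with linear endomorphisms F_W, F_V, F_Q respectively, and let φ : W → V and ψ : V → Q be linear maps with φ ∘ F_W = F_V ∘ φ and ψ ∘ F_V = F_Q ∘ ψ, such that the sequence W → V → Q is exact at V (i.e. im φ = ker ψ). Assume (W, F_W) and (Q, F_Q) are 1-semi-simple, and that at least one of the following holds: (a) every q ∈ Q with F_Q(q) = q equals ψ(v) for some v ∈ V with F_V(v) = v; or (b) ker(id − F_W) = 0; or (c) ker(id − F_Q) = 0. Then (V, F_V) is 1-semi-simple. -/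
/-- On a finite-dimensional space, if `T` is injective on an invariant submodule `p`,
then `T` maps `p` onto `p`. -/
lemma aux_surjOn {K : Type*} [Field K] {V : Type*} [AddCommGroup V] [Module K V]
    [FiniteDimensional K V] (T : V →ₗ[K] V) (p : Submodule K V)
    (hp : ∀ x ∈ p, T x ∈ p) (hdisj : Disjoint (LinearMap.ker T) p) :
    ∀ y ∈ p, ∃ k ∈ p, T k = y := by
  set S : p →ₗ[K] p := T.restrict hp with hS
  have hSinj : Function.Injective S := by
    rw [← LinearMap.ker_eq_bot, eq_bot_iff]
    intro x hx
    have hx0 : T (x : V) = 0 := congrArg Subtype.val hx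
    have : (x : V) ∈ LinearMap.ker T ⊓ p := ⟨hx0, x.2⟩
    rw [hdisj.eq_bot] at this
    exact Subtype.ext this
  have hSsurj : Function.Surjective S :=
    (LinearMap.injective_iff_surjective).mp hSinj
  intro y hy
  obtain ⟨k, hk⟩ := hSsurj ⟨y, hy⟩
  exact ⟨(k : V), k.2, congrArg Subtype.val hk⟩

/-- Injectivity of `invariantsToCoinvariants` gives disjointness of kernel and range. -/
lemma aux_disjoint {K : Type*} [Field K] {V : Type*} [AddCommGroup V] [Module K V]
    (F : V →ₗ[K] V) (h : Function.Injective (invariantsToCoinvariants F)) :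
    Disjoint (LinearMap.ker (LinearMap.id - F)) (LinearMap.range (LinearMap.id - F)) := by
  rw [Submodule.disjoint_def]
  intro x hxk hxr
  have h0 : invariantsToCoinvariants F ⟨x, hxk⟩ = invariantsToCoinvariants F 0 := by
    simp only [invariantsToCoinvariants, LinearMap.comp_apply, Submodule.subtype_apply,
      map_zero, ZeroMemClass.coe_zero, Submodule.mkQ_apply]
    rw [Submodule.Quotient.mk_eq_zero]
    exact hxr
  exact congrArg Subtype.val (h h0)

/-- Let `W → V → Q` be a sequence of finite-dimensional `ℚ_[ℓ]`-vector
spaces with equivariant maps `φ, ψ`, exact at `V`. If `(W, F_W)` and `(Q, F_Q)` are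
1-semi-simple and either invariants lift from `Q` to `V`, or `W` has no nonzero invariants,
or `Q` has no nonzero invariants, then `(V, F_V)` is 1-semi-simple. -/
theorem oneSemisimple_of_exact
    (ℓ : ℕ) [Fact ℓ.Prime]
    (W V Q : Type*) [AddCommGroup W] [Module ℚ_[ℓ] W] [FiniteDimensional ℚ_[ℓ] W]
    [AddCommGroup V] [Module ℚ_[ℓ] V] [FiniteDimensional ℚ_[ℓ] V]
    [AddCommGroup Q] [Module ℚ_[ℓ] Q] [FiniteDimensional ℚ_[ℓ] Q]
    (FW : W →ₗ[ℚ_[ℓ]] W) (FV : V →ₗ[ℚ_[ℓ]] V) (FQ : Q →ₗ[ℚ_[ℓ]] Q)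
    (φ : W →ₗ[ℚ_[ℓ]] V) (ψ : V →ₗ[ℚ_[ℓ]] Q)
    (hφ : φ ∘ₗ FW = FV ∘ₗ φ) (hψ : ψ ∘ₗ FV = FQ ∘ₗ ψ)
    (hexact : LinearMap.range φ = LinearMap.ker ψ)
    (hW : Function.Bijective (invariantsToCoinvariants FW))
    (hQ : Function.Bijective (invariantsToCoinvariants FQ))
    (h : (∀ q : Q, FQ q = q → ∃ v : V, FV v = v ∧ ψ v = q) ∨
      LinearMap.ker (LinearMap.id - FW) = ⊥ ∨
      LinearMap.ker (LinearMap.id - FQ) = ⊥) :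
    Function.Bijective (invariantsToCoinvariants FV) := by
  set TW : W →ₗ[ℚ_[ℓ]] W := LinearMap.id - FW with hTW
  set TV : V →ₗ[ℚ_[ℓ]] V := LinearMap.id - FV with hTV
  set TQ : Q →ₗ[ℚ_[ℓ]] Q := LinearMap.id - FQ with hTQ
  -- equivariance, pointwise
  have hφT : ∀ w : W, φ (TW w) = TV (φ w) := by
    intro w
    have := LinearMap.congr_fun hφ w
    simp only [LinearMap.comp_apply] at this
    simp [hTW, hTV, LinearMap.sub_apply, this]
  have hψT : ∀ v : V, ψ (TV v) = TQ (ψ v) := by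
    intro v
    have := LinearMap.congr_fun hψ v
    simp only [LinearMap.comp_apply] at this
    simp [hTV, hTQ, LinearMap.sub_apply, this]
  have hWdisj := aux_disjoint FW hW.1
  have hQdisj := aux_disjoint FQ hQ.1
  -- key lemma L: if TW² u ∈ ker φ then TW u ∈ ker φ
  have hL : ∀ u : W, φ (TW (TW u)) = 0 → φ (TW u) = 0 := by
    intro u hu
    set p : Submodule ℚ_[ℓ] W := LinearMap.ker φ ⊓ LinearMap.range TW with hp
    have hpinv : ∀ x ∈ p, TW x ∈ p := by
      rintro x ⟨hx1, hx2⟩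
      refine ⟨?_, ⟨x, rfl⟩⟩
      show φ (TW x) = 0
      rw [hφT, show φ x = 0 from hx1, map_zero]
    have hpdisj : Disjoint (LinearMap.ker TW) p := by
      refine Disjoint.mono_right ?_ hWdisj
      exact inf_le_right
    have hmem : TW (TW u) ∈ p := ⟨hu, ⟨TW u, rfl⟩⟩
    obtain ⟨k, hk, hTk⟩ := aux_surjOn TW p hpinv hpdisj _ hmem
    have h0 : TW u - k ∈ LinearMap.ker TW ⊓ LinearMap.range TW := by
      constructor
      · show TW (TW u - k) = 0
        rw [map_sub, hTk, sub_self]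
      · exact Submodule.sub_mem _ ⟨u, rfl⟩ hk.2
    rw [hWdisj.eq_bot, Submodule.mem_bot, sub_eq_zero] at h0
    have : TW u = k := h0
    rw [this]; exact hk.1
  -- injectivity
  have hinj : Function.Injective (invariantsToCoinvariants FV) := by
    rw [← LinearMap.ker_eq_bot, eq_bot_iff]
    rintro ⟨v, hv⟩ hv0
    have hvr : v ∈ LinearMap.range TV := by
      have : Submodule.Quotient.mk v = (0 : V ⧸ LinearMap.range TV) :=
        hv0
      rwa [Submodule.Quotient.mk_eq_zero] at this
    have hvk : TV v = 0 := hv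
    suffices hv0' : v = 0 by
      simp only [Submodule.mem_bot]
      exact Subtype.ext hv0'
    obtain ⟨x, hx⟩ := hvr
    -- ψ v = 0
    have hψv : ψ v = 0 := by
      have h1 : TQ (ψ v) = 0 := by rw [← hψT, hvk, map_zero]
      have h2 : ψ v ∈ LinearMap.range TQ := ⟨ψ x, by rw [← hψT, hx]⟩
      have := Submodule.disjoint_def.mp hQdisj (ψ v) h1 h2
      exact this
    have hψx : TQ (ψ x) = 0 := by rw [← hψT, hx, hψv]
    -- get u with v = φ (TW u)
    have key : (∃ u : W, v = φ (TW u)) → v = 0 := by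
      rintro ⟨u, hu⟩
      have : φ (TW (TW u)) = 0 := by
        rw [hφT, ← hu, hvk]
      have := hL u this
      rw [hu, this]
    rcases h with ha | hb | hc
    · -- case (a)
      have hFQ : FQ (ψ x) = ψ x := by
        have h' : ψ x - FQ (ψ x) = 0 := by
          have := hψx
          simpa [hTQ, LinearMap.sub_apply] using this
        exact (sub_eq_zero.mp h').symm
      obtain ⟨v', hv'1, hv'2⟩ := ha (ψ x) hFQ
      have hker : x - v' ∈ LinearMap.ker ψ := by
        simp [LinearMap.mem_ker, map_sub, hv'2]
      rw [← hexact] at hker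
      obtain ⟨w, hw⟩ := hker
      apply key
      refine ⟨w, ?_⟩
      have hTv' : TV v' = 0 := by
        show v' - FV v' = 0
        rw [hv'1, sub_self]
      calc v = TV x := hx.symm
        _ = TV (x - v') + TV v' := by rw [map_sub]; abel
        _ = TV (φ w) := by rw [hTv', add_zero, hw]
        _ = φ (TW w) := (hφT w).symm
    · -- case (b): ker TW = ⊥
      have hvmem : v ∈ LinearMap.ker ψ := hψv
      rw [← hexact] at hvmem
      obtain ⟨w, hw⟩ := hvmem
      have hTWw : φ (TW w) = 0 := by rw [hφT, hw, hvk]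
      -- TW surjective onto ker φ
      have hpinv : ∀ x ∈ LinearMap.ker φ, TW x ∈ LinearMap.ker φ := by
        intro x hx
        show φ (TW x) = 0
        rw [hφT, show φ x = 0 from hx, map_zero]
      have hdisj : Disjoint (LinearMap.ker TW) (LinearMap.ker φ) := by
        rw [hb]; exact disjoint_bot_left
      obtain ⟨k, hk, hTk⟩ := aux_surjOn TW (LinearMap.ker φ) hpinv hdisj (TW w) hTWw
      have : w - k ∈ LinearMap.ker TW := by
        show TW (w - k) = 0
        rw [map_sub, hTk, sub_self]
      rw [hb, Submodule.mem_bot, sub_eq_zero] at this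
      rw [← hw, this]
      exact hk
    · -- case (c): ker TQ = ⊥
      have hψx0 : ψ x = 0 := by
        have : ψ x ∈ LinearMap.ker TQ := hψx
        rwa [hc, Submodule.mem_bot] at this
      have hxmem : x ∈ LinearMap.ker ψ := hψx0
      rw [← hexact] at hxmem
      obtain ⟨u, hu⟩ := hxmem
      apply key
      exact ⟨u, by rw [← hx, ← hu, hφT]⟩
  refine ⟨hinj, ?_⟩
  have hdim : Module.finrank ℚ_[ℓ] (LinearMap.ker TV) =
      Module.finrank ℚ_[ℓ] (V ⧸ LinearMap.range TV) := by
    have h1 := LinearMap.finrank_range_add_finrank_ker TV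
    have h2 := Submodule.finrank_quotient_add_finrank (LinearMap.range TV)
    omega
  exact (LinearMap.injective_iff_surjective_of_finrank_eq_finrank hdim).mp hinj
end

section
/- Let ℓ be a prime number, let V be a finite-dimensional ℚ_ℓ-vector space, and let F : V → V be a linear endomorphism such that (V, F) is 1-semi-simple. Let K ⊆ V be a linear subspace with F(K) ⊆ K. Then K ∩ (id − F)(V) = (id − F)(K) as subspaces of V; equivalently, the induced map on coinvariants K/im(id − F|_K) → V/im(id − F) is injective. -/
/-- If `(V, F)` is 1-semi-simple and `K ⊆ V` is an `F`-invariant subspace,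
then `K ∩ (id − F)(V) = (id − F)(K)` as subspaces of `V`; equivalently, the induced map on
coinvariants `K ⧸ im(id − F|_K) → V ⧸ im(id − F)` is injective. -/
theorem inf_range_eq_map_of_oneSemisimple
    (ℓ : ℕ) [Fact ℓ.Prime] (V : Type*) [AddCommGroup V] [Module ℚ_[ℓ] V]
    [FiniteDimensional ℚ_[ℓ] V] (F : V →ₗ[ℚ_[ℓ]] V)
    (hF : Function.Bijective (invariantsToCoinvariants F))
    (K : Submodule ℚ_[ℓ] V) (hK : ∀ x ∈ K, F x ∈ K) :
    K ⊓ LinearMap.range (LinearMap.id - F) =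
      Submodule.map (LinearMap.id - F) K := by
  set G : V →ₗ[ℚ_[ℓ]] V := LinearMap.id - F with hGdef
  -- disjointness of ker G and range G from injectivity of hF
  have hdisj : ∀ x : V, x ∈ LinearMap.ker G → x ∈ LinearMap.range G → x = 0 := by
    intro x hk hr
    have h0 : invariantsToCoinvariants F ⟨x, hk⟩ = 0 := by
      simp only [invariantsToCoinvariants, LinearMap.comp_apply, Submodule.subtype_apply,
        Submodule.mkQ_apply]
      exact (Submodule.Quotient.mk_eq_zero _).mpr hr
    have := hF.injective (h0.trans (map_zero (invariantsToCoinvariants F)).symm)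
    exact congrArg Subtype.val this
  -- G restricts to K
  have hGK : ∀ x ∈ K, G x ∈ K := by
    intro x hx
    simpa [hGdef] using K.sub_mem hx (hK x hx)
  set G' : K →ₗ[ℚ_[ℓ]] K := G.restrict hGK with hG'def
  -- disjointness inside K
  have hdisjK : Disjoint (LinearMap.ker G') (LinearMap.range G') := by
    rw [disjoint_iff_inf_le]
    rintro x ⟨hk, hr⟩
    have hk' : (x : V) ∈ LinearMap.ker G := by
      have := congrArg Subtype.val (LinearMap.mem_ker.mp hk)
      simpa [hG'def, LinearMap.restrict_apply] using this
    have hr' : (x : V) ∈ LinearMap.range G := by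
      obtain ⟨y, hy⟩ := hr
      exact ⟨(y : V), by simpa [hG'def, LinearMap.restrict_apply] using congrArg Subtype.val hy⟩
    have : (x : V) = 0 := hdisj _ hk' hr'
    simpa using Subtype.ext this
  -- codisjointness by rank-nullity
  have hsup : LinearMap.ker G' ⊔ LinearMap.range G' = ⊤ := by
    apply Submodule.eq_top_of_finrank_eq
    have h1 := Submodule.finrank_sup_add_finrank_inf_eq (LinearMap.ker G') (LinearMap.range G')
    rw [disjoint_iff.mp hdisjK] at h1
    have h2 := LinearMap.finrank_range_add_finrank_ker G'
    rw [finrank_bot, add_zero] at h1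
    omega
  refine le_antisymm ?_ ?_
  · rintro x ⟨hxK, hxR⟩
    have hx' : (⟨x, hxK⟩ : K) ∈ LinearMap.ker G' ⊔ LinearMap.range G' := hsup ▸ Submodule.mem_top
    obtain ⟨k, hk, w, hw, hkw⟩ := Submodule.mem_sup.mp hx'
    obtain ⟨w', hw'⟩ := hw
    have hw'' : G (w' : V) = (w : V) := by
      have := congrArg Subtype.val hw'
      simpa [hG'def, LinearMap.restrict_apply] using this
    have hkval : (k : V) = x - G (w' : V) := by
      have := congrArg Subtype.val hkw
      simp only [Submodule.coe_add] at this
      rw [hw'']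
      rw [← this]; abel
    have hk' : (k : V) ∈ LinearMap.ker G := by
      have := congrArg Subtype.val (LinearMap.mem_ker.mp hk)
      simpa [hG'def, LinearMap.restrict_apply] using this
    have hk'' : (k : V) ∈ LinearMap.range G := by
      rw [hkval]
      exact Submodule.sub_mem _ hxR ⟨_, rfl⟩
    have hk0 : (k : V) = 0 := hdisj _ hk' hk''
    rw [hk0] at hkval
    exact ⟨(w' : V), w'.2, (sub_eq_zero.mp hkval.symm).symm⟩
  · rintro x ⟨k, hkK, rfl⟩
    exact ⟨hGK k hkK, ⟨k, rfl⟩⟩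
end

section
/- Let k be a field, let V and W be finite-dimensional k-vector spaces, let A : V → V and B : W → W be linear endomorphisms, let λ ∈ k be nonzero, and suppose there exists a nonzero vector w ∈ W with B(w) = λ⁻¹ · w. If the induced endomorphism A ⊗ B of the tensor product V ⊗ W is 1-semi-simple (i.e. the natural map ker(id − A⊗B) → (V ⊗ W)/im(id − A⊗B) is an isomorphism), then the generalized eigenspace of A for the eigenvalue λ equals the eigenspace of A for the eigenvalue λ; that is, A is semi-simple at the eigenvalue λ. -/
/-- Over a field, the tensor of two nonzero vectors is nonzero. -/
lemma tmul_ne_zero_aux {k : Type*} [Field k] {V W : Type*}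
    [AddCommGroup V] [Module k V] [AddCommGroup W] [Module k W]
    {v : V} {w : W} (hv : v ≠ 0) (hwne : w ≠ 0) :
    (v ⊗ₜ[k] w : TensorProduct k V W) ≠ 0 := by
  intro h
  obtain ⟨f, hf⟩ : ∃ f : Module.Dual k W, f w ≠ 0 := by
    by_contra hc
    push_neg at hc
    exact hwne ((Module.forall_dual_apply_eq_zero_iff k w).mp hc)
  have := congrArg (fun x => (TensorProduct.rid k V) ((LinearMap.lTensor V f) x)) h
  simp [TensorProduct.rid_tmul, smul_eq_zero] at this
  rcases this with h1 | h1
  · exact hf h1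
  · exact hv h1

/-- Let `A : V → V` and `B : W → W` be endomorphisms of finite-dimensional
`k`-vector spaces, `λ ≠ 0`, and suppose some nonzero `w ∈ W` satisfies `B w = λ⁻¹ • w`.
If the induced endomorphism `A ⊗ B` of `V ⊗ W` is 1-semi-simple, then the generalized
eigenspace of `A` at `λ` equals the eigenspace of `A` at `λ`, i.e. `A` is semi-simple at
the eigenvalue `λ`. -/
theorem semisimple_at_eigenvalue_of_tensor_oneSemisimple
    (k : Type*) [Field k] (V W : Type*)
    [AddCommGroup V] [Module k V] [FiniteDimensional k V]
    [AddCommGroup W] [Module k W] [FiniteDimensional k W]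
    (A : V →ₗ[k] V) (B : W →ₗ[k] W) (lam : k) (hlam : lam ≠ 0)
    (hw : ∃ w : W, w ≠ 0 ∧ B w = lam⁻¹ • w)
    (hT : Function.Bijective (invariantsToCoinvariants (TensorProduct.map A B))) :
    (⨆ n : ℕ, LinearMap.ker ((A - lam • LinearMap.id) ^ n)) =
      LinearMap.ker (A - lam • LinearMap.id) := by
  obtain ⟨w, hwne, hBw⟩ := hw
  set p : V →ₗ[k] V := A - lam • LinearMap.id with hp
  set T : TensorProduct k V W →ₗ[k] TensorProduct k V W := TensorProduct.map A B with hTdef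
  -- Key step: ker (p ^ 2) ≤ ker p.
  have key : LinearMap.ker (p ^ 2) ≤ LinearMap.ker p := by
    intro v hv
    rw [LinearMap.mem_ker] at hv ⊢
    by_contra hu
    set u : V := p v with hu'
    have hpu : p u = 0 := by
      simpa [pow_two, Module.End.mul_apply] using hv
    have hAu : A u = lam • u := by
      have := hpu
      rw [hp] at this
      simp only [LinearMap.sub_apply, LinearMap.smul_apply, LinearMap.id_apply] at this
      exact sub_eq_zero.mp this
    -- x := u ⊗ w is a nonzero invariant that is also a coboundary.
    set x : TensorProduct k V W := u ⊗ₜ[k] w with hx'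
    have hTx : T x = x := by
      rw [hx', hTdef]
      simp only [TensorProduct.map_tmul, hAu, hBw]
      rw [TensorProduct.smul_tmul, smul_smul, mul_inv_cancel₀ hlam, one_smul]
    have hxker : x ∈ LinearMap.ker (LinearMap.id - T) := by
      simp [LinearMap.mem_ker, hTx]
    have hxrange : x ∈ LinearMap.range (LinearMap.id - T) := by
      refine ⟨(-lam) • (v ⊗ₜ[k] w), ?_⟩
      simp only [LinearMap.sub_apply, LinearMap.id_apply, map_smul, hTdef,
        TensorProduct.map_tmul, hBw]
      rw [hx', hu', hp]
      simp only [LinearMap.sub_apply, LinearMap.smul_apply, LinearMap.id_apply,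
        TensorProduct.sub_tmul, TensorProduct.tmul_smul, ← TensorProduct.smul_tmul']
      match_scalars <;> field_simp
    -- contradiction with injectivity
    have h0 : invariantsToCoinvariants T ⟨x, hxker⟩ = 0 := by
      simpa [invariantsToCoinvariants, Submodule.Quotient.mk_eq_zero] using
        (Submodule.Quotient.mk_eq_zero _).mpr hxrange
    have := hT.injective (a₁ := ⟨x, hxker⟩) (a₂ := 0) (by simpa using h0)
    have hx0 : x = 0 := by simpa using congrArg Subtype.val this
    exact tmul_ne_zero_aux hu hwne hx0
  -- From the key step, all higher kernels collapse.
  have all : ∀ n : ℕ, LinearMap.ker (p ^ n) ≤ LinearMap.ker p := by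
    intro n
    induction n with
    | zero =>
      intro v hv
      rw [LinearMap.mem_ker] at hv ⊢
      simp only [pow_zero, Module.End.one_apply] at hv
      simp [hv]
    | succ m ih =>
      intro v hv
      have h1 : p v ∈ LinearMap.ker (p ^ m) := by
        rw [LinearMap.mem_ker] at hv ⊢
        rw [pow_succ, Module.End.mul_apply] at hv
        exact hv
      have h2 : p (p v) = 0 := ih h1
      exact key (by simp [LinearMap.mem_ker, pow_two, Module.End.mul_apply, h2])
  refine le_antisymm (iSup_le all) ?_
  have := le_iSup (fun n : ℕ => LinearMap.ker (p ^ n)) 1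
  simpa using this
end

section
/- Let ℓ be a prime number, let V be a finite-dimensional ℚ_ℓ-vector space with a linear endomorphism F : V → V such that (V, F) is 1-semi-simple, let W be a ℚ_ℓ-vector space (possibly infinite-dimensional) with a linear endomorphism G : W → W, and let φ : V → W be a linear map with φ ∘ F = G ∘ φ. Then every element ω in the image of φ with G(ω) = ω admits a fixed lift: there exists v ∈ V with F(v) = v and φ(v) = ω. -/
lemma aux_sup_eq_top {K V : Type*} [Field K] [AddCommGroup V] [Module K V]
    [FiniteDimensional K V] (f : V →ₗ[K] V)
    (h : Disjoint (LinearMap.ker f) (LinearMap.range f)) :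
    LinearMap.ker f ⊔ LinearMap.range f = ⊤ := by
  apply Submodule.eq_top_of_finrank_eq
  have h1 := Submodule.finrank_sup_add_finrank_inf_eq (LinearMap.ker f) (LinearMap.range f)
  rw [disjoint_iff.mp h, finrank_bot] at h1
  have h2 := LinearMap.finrank_range_add_finrank_ker f
  omega

/-- Let `(V, F)` be 1-semi-simple with `V` finite-dimensional over
`ℚ_[ℓ]`, let `W` be a (possibly infinite-dimensional) `ℚ_[ℓ]`-vector space with an
endomorphism `G`, and let `φ : V → W` be linear with `φ ∘ F = G ∘ φ`. Then every `ω` in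
the image of `φ` with `G ω = ω` admits a fixed lift: some `v ∈ V` with `F v = v` and
`φ v = ω`. -/
theorem exists_fixed_lift_of_oneSemisimple
    (ℓ : ℕ) [Fact ℓ.Prime] (V : Type*) [AddCommGroup V] [Module ℚ_[ℓ] V]
    [FiniteDimensional ℚ_[ℓ] V] (F : V →ₗ[ℚ_[ℓ]] V)
    (hF : Function.Bijective (invariantsToCoinvariants F))
    (W : Type*) [AddCommGroup W] [Module ℚ_[ℓ] W]
    (G : W →ₗ[ℚ_[ℓ]] W) (φ : V →ₗ[ℚ_[ℓ]] W) (hφ : φ ∘ₗ F = G ∘ₗ φ)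
    (ω : W) (hω : G ω = ω) (hmem : ∃ v : V, φ v = ω) :
    ∃ v : V, F v = v ∧ φ v = ω := by
  obtain ⟨v0, hv0⟩ := hmem
  set N : V →ₗ[ℚ_[ℓ]] V := LinearMap.id - F with hNdef
  have hcomm : ∀ x : V, φ (F x) = G (φ x) := fun x => LinearMap.congr_fun hφ x
  -- injectivity consequence
  have hinj : ∀ x : V, x ∈ LinearMap.ker N → x ∈ LinearMap.range N → x = 0 := by
    intro x hx hxr
    have h0 : invariantsToCoinvariants F ⟨x, hx⟩ = invariantsToCoinvariants F 0 := by
      rw [map_zero]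
      simp only [invariantsToCoinvariants, LinearMap.comp_apply, Submodule.subtype_apply,
        Submodule.mkQ_apply, Submodule.Quotient.mk_eq_zero]
      exact hxr
    have := hF.injective h0
    exact congrArg Subtype.val this
  -- kernel of φ is N-stable
  have hKstab : ∀ x ∈ LinearMap.ker φ, N x ∈ LinearMap.ker φ := by
    intro x hx
    rw [LinearMap.mem_ker] at hx ⊢
    simp [hNdef, hcomm x, hx]
  set f : LinearMap.ker φ →ₗ[ℚ_[ℓ]] LinearMap.ker φ := N.restrict hKstab with hfdef
  have hdisj : Disjoint (LinearMap.ker f) (LinearMap.range f) := by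
    rw [Submodule.disjoint_def]
    intro x hxk hxr
    rw [LinearMap.mem_ker] at hxk
    obtain ⟨y, hy⟩ := hxr
    have hxk' : (x : V) ∈ LinearMap.ker N := by
      rw [LinearMap.mem_ker]
      have : ((f x : LinearMap.ker φ) : V) = (0 : V) := by rw [hxk]; rfl
      simpa [hfdef, LinearMap.restrict_apply] using this
    have hxr' : (x : V) ∈ LinearMap.range N := by
      refine ⟨(y : V), ?_⟩
      have : ((f y : LinearMap.ker φ) : V) = (x : V) := by rw [hy]
      simpa [hfdef, LinearMap.restrict_apply] using this
    exact Subtype.ext (hinj _ hxk' hxr')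
  have hsup := aux_sup_eq_top f hdisj
  -- the element u = v0 - F v0 lies in ker φ
  have hu : φ (v0 - F v0) = 0 := by
    rw [map_sub, hv0, hcomm, hv0, hω, sub_self]
  have huK : (v0 - F v0) ∈ LinearMap.ker φ := hu
  have hUmem : (⟨v0 - F v0, huK⟩ : LinearMap.ker φ) ∈ LinearMap.ker f ⊔ LinearMap.range f := by
    rw [hsup]; trivial
  obtain ⟨a, haK, b, hbR, hab⟩ := Submodule.mem_sup.mp hUmem
  obtain ⟨w, hw⟩ := hbR
  refine ⟨v0 - (w : V), ?_, ?_⟩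
  · -- N (v0 - w) = a, and a ∈ ker N ∩ range N = 0
    have hNw : N (w : V) = (b : V) := by
      have : ((f w : LinearMap.ker φ) : V) = (b : V) := by rw [hw]
      simpa [hfdef, LinearMap.restrict_apply] using this
    have hNv : N (v0 - (w : V)) = (a : V) := by
      have hab' : (a : V) + (b : V) = v0 - F v0 := congrArg Subtype.val hab
      have : N (v0 - (w : V)) = N v0 - N (w : V) := map_sub N _ _
      rw [this, hNw]
      have hNv0 : N v0 = v0 - F v0 := by simp [hNdef]
      rw [hNv0, ← hab']
      abel
    have haker : (a : V) ∈ LinearMap.ker N := by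
      rw [LinearMap.mem_ker] at haK ⊢
      have : ((f a : LinearMap.ker φ) : V) = (0 : V) := by rw [haK]; rfl
      simpa [hfdef, LinearMap.restrict_apply] using this
    have harange : (a : V) ∈ LinearMap.range N := ⟨v0 - (w : V), hNv⟩
    have ha0 : (a : V) = 0 := hinj _ haker harange
    have hNv' : N (v0 - (w : V)) = 0 := by rw [hNv, ha0]
    rw [hNdef, LinearMap.sub_apply, LinearMap.id_apply] at hNv'
    exact (sub_eq_zero.mp hNv').symm
  · rw [map_sub, hv0, w.2, sub_zero]
end
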